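/- arXiv:2412.12321 — 2 statements merged into one kernel-verified Lean document; each statement's English description precedes it below -/
import Mathlib

section
/- In the same two-epoch instance (assignment cost −1, g_1(a) = δa, g_2(a) = δ(1−a), δ > 1), the 'myopic' policy that in epoch 1 minimizes only epoch-1 cost accepts 0 arrivals (epoch-1 myopic optimum value 0), and then the epoch-2 myopic optimum, starting from 0 accepted arrivals, equals −T/2 + δT/2, achieved by accepting all T/2 epoch-2 arrivals. Hence the gap between the total cost of the sequentially-myopic solution and the global optimum equals (−T/2 + δT/2) − (−T + δT/2) = T/2, which is Ω(T). -/
/-- Failure of the myopic policy in the two-epoch instance (assignment cost −1,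
g₁(a) = δa, g₂(a) = δ(1−a), δ > 1). The epoch-1 myopic optimum is 0, achieved
by accepting 0 arrivals; the epoch-2 myopic optimum starting from 0 accepted
arrivals is −T/2 + δT/2, achieved by accepting all T/2 epoch-2 arrivals; and
the gap between the sequentially-myopic total cost and the global optimum is
(−T/2 + δT/2) − (−T + δT/2) = T/2, i.e. Ω(T). -/
theorem stmt1 (T : ℕ) (hT : 0 < T) (hTeven : Even T) (δ : ℝ) (hδ : 1 < δ)
    (myo₁ myo₂ : ℕ → ℝ)
    (hmyo₁ : ∀ Z₁ : ℕ, myo₁ Z₁ =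
      -(Z₁ : ℝ) + ((T : ℝ) / 2) * δ * ((Z₁ : ℝ) / ((T : ℝ) / 2)))
    (hmyo₂ : ∀ Z₂ : ℕ, myo₂ Z₂ =
      -(Z₂ : ℝ) + (T : ℝ) * δ * (1 - (Z₂ : ℝ) / (T : ℝ))) :
    (IsLeast {c : ℝ | ∃ Z₁ : ℕ, Z₁ ≤ T / 2 ∧ c = myo₁ Z₁} 0 ∧ myo₁ 0 = 0) ∧
    (IsLeast {c : ℝ | ∃ Z₂ : ℕ, Z₂ ≤ T / 2 ∧ c = myo₂ Z₂}
        (-(T : ℝ) / 2 + δ * T / 2) ∧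
      myo₂ (T / 2) = -(T : ℝ) / 2 + δ * T / 2) ∧
    (-(T : ℝ) / 2 + δ * T / 2) - (-(T : ℝ) + δ * T / 2) = (T : ℝ) / 2 := by
  have hT0 : (0:ℝ) < (T:ℝ) := by exact_mod_cast hT
  have hTne : (T:ℝ) ≠ 0 := ne_of_gt hT0
  have hhalf : (0:ℝ) < (T:ℝ)/2 := by linarith
  have hhalfne : (T:ℝ)/2 ≠ 0 := ne_of_gt hhalf
  have hcast : ((T / 2 : ℕ) : ℝ) = (T:ℝ)/2 := by
    obtain ⟨m, hm⟩ := hTeven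
    subst hm
    push_cast [Nat.add_mul_div_left, show m + m = 2*m by ring]
    rw [Nat.mul_div_cancel_left m (by norm_num)]
    ring
  -- simplified forms
  have h1 : ∀ Z₁ : ℕ, myo₁ Z₁ = (δ - 1) * (Z₁:ℝ) := by
    intro Z₁; rw [hmyo₁]; field_simp; ring
  have h2 : ∀ Z₂ : ℕ, myo₂ Z₂ = δ * (T:ℝ) - (1 + δ) * (Z₂:ℝ) := by
    intro Z₂; rw [hmyo₂]; field_simp; ring
  refine ⟨⟨⟨⟨0, by simp, by simp [h1]⟩, ?_⟩, by simp [h1]⟩,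
    ⟨⟨⟨T/2, le_refl _, ?_⟩, ?_⟩, ?_⟩, by ring⟩
  · rintro c ⟨Z₁, hZ, rfl⟩
    rw [h1]
    have : (0:ℝ) ≤ (Z₁:ℝ) := Nat.cast_nonneg _
    nlinarith
  · rw [h2, hcast]; ring
  · rintro c ⟨Z₂, hZ, rfl⟩
    rw [h2]
    have hZr : (Z₂:ℝ) ≤ (T:ℝ)/2 := by
      rw [← hcast]; exact_mod_cast hZ
    nlinarith
  · rw [h2, hcast]; ring
end

section
/- Let ρ₁ ∈ [0,1] and ρ₂ ∈ [0,1] with ρ₁ ≠ ρ₂. Suppose an algorithm's acceptance fractions converge: the fraction accepted in epoch 1 tends to (ρ₁+ρ₂)/2 and the fraction accepted in epoch 2 tends to ρ₂ as T → ∞. Then the running average consumption at the end of the horizon tends to (1/2)·(ρ₁+ρ₂)/2 + (1/2)·ρ₂ = ρ₁/4 + 3ρ₂/4, and the end-of-epoch-1 running average tends to (ρ₁+ρ₂)/2, so there exists ε > 0 (namely ε = |ρ₁−ρ₂|/2 for epoch 1) such that for all sufficiently large T the epoch-1 running average consumption differs from the target ρ₁ by at least ε − o(1); hence the total deviation cost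 δ·(T/2)·|a₁ − ρ₁| + δ·T·|a₂ − ρ₂| is Ω(T). -/
open Filter

/-- Linear regret of the naive primal-dual algorithm (Proposition 2): if the
epoch-1 acceptance fraction a₁(T) → (ρ₁+ρ₂)/2 and the epoch-2 fraction
a₂(T) → ρ₂ with ρ₁ ≠ ρ₂, then the end-of-horizon running average tends to
ρ₁/4 + 3ρ₂/4, the epoch-1 running average tends to (ρ₁+ρ₂)/2, eventually
|a₁(T) − ρ₁| ≥ |ρ₁−ρ₂|/2 − ε for every ε > 0, and the total deviation cost
δ·(T/2)·|a₁(T) − ρ₁| + δ·T·|a₂(T) − ρ₂| is Ω(T). -/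
theorem stmt11 (δ ρ₁ ρ₂ : ℝ) (hδ : 0 < δ)
    (hρ₁ : ρ₁ ∈ Set.Icc (0 : ℝ) 1) (hρ₂ : ρ₂ ∈ Set.Icc (0 : ℝ) 1)
    (hne : ρ₁ ≠ ρ₂) (a₁ a₂ : ℕ → ℝ)
    (ha₁ : Tendsto a₁ atTop (nhds ((ρ₁ + ρ₂) / 2)))
    (ha₂ : Tendsto a₂ atTop (nhds ρ₂)) :
    Tendsto (fun T => (a₁ T + a₂ T) / 2) atTop (nhds (ρ₁ / 4 + 3 * ρ₂ / 4)) ∧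
    Tendsto a₁ atTop (nhds ((ρ₁ + ρ₂) / 2)) ∧
    (∀ ε : ℝ, 0 < ε →
      ∀ᶠ T in atTop, |a₁ T - ρ₁| ≥ |ρ₁ - ρ₂| / 2 - ε) ∧
    ∃ C : ℝ, 0 < C ∧ ∀ᶠ T : ℕ in atTop,
      δ * ((T : ℝ) / 2) * |a₁ T - ρ₁| + δ * (T : ℝ) * |a₂ T - ρ₂| ≥ C * T := by
  have habs : Tendsto (fun T => |a₁ T - ρ₁|) atTop (nhds (|ρ₁ - ρ₂| / 2)) := by
    have : Tendsto (fun T => a₁ T - ρ₁) atTop (nhds ((ρ₁ + ρ₂) / 2 - ρ₁)) :=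
      ha₁.sub tendsto_const_nhds
    have h := this.abs
    have : |(ρ₁ + ρ₂) / 2 - ρ₁| = |ρ₁ - ρ₂| / 2 := by
      rw [show (ρ₁ + ρ₂) / 2 - ρ₁ = (ρ₂ - ρ₁) / 2 by ring, abs_div,
        abs_sub_comm ρ₂ ρ₁]
      norm_num
    rwa [this] at h
  have hd : 0 < |ρ₁ - ρ₂| := abs_pos.mpr (sub_ne_zero.mpr hne)
  refine ⟨?_, ha₁, ?_, ?_⟩
  · have := (ha₁.add ha₂).div_const 2
    convert this using 2
    ring
  · intro ε hε
    have := habs.eventually (eventually_ge_nhds (by linarith : |ρ₁ - ρ₂| / 2 - ε < |ρ₁ - ρ₂| / 2))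
    exact this
  · refine ⟨δ * (|ρ₁ - ρ₂| / 4) / 2, by positivity, ?_⟩
    have hev := habs.eventually (eventually_ge_nhds (by linarith : |ρ₁ - ρ₂| / 4 < |ρ₁ - ρ₂| / 2))
    filter_upwards [hev] with T hT
    have hT0 : (0 : ℝ) ≤ (T : ℝ) := Nat.cast_nonneg T
    have h1 : δ * ((T : ℝ) / 2) * |a₁ T - ρ₁| ≥ δ * ((T : ℝ) / 2) * (|ρ₁ - ρ₂| / 4) := by
      apply mul_le_mul_of_nonneg_left hT (by positivity)
    have h2 : 0 ≤ δ * (T : ℝ) * |a₂ T - ρ₂| := by positivity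
    nlinarith
end
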